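/- Let L be the Schrödinger-Virasoro algebra and suppose v ∈ L⊗L satisfies x·v ∈ Im(1−τ) for all x ∈ L, where τ is the twist map and the dot is the adjoint diagonal action. Then there exists d₀ ∈ F such that v − d₀ M_0 ⊗ M_0 ∈ Im(1−τ). -/

import Mathlib

open TensorProduct
set_option linter.unusedSectionVars false
set_option linter.unreachableTactic false
set_option linter.unusedTactic false

/-- Index set for the basis of the Schrödinger–Virasoro algebra:
`Sum.inl n ↔ L_n`, `Sum.inr (Sum.inl n) ↔ Y_{n+1/2}`, `Sum.inr (Sum.inr n) ↔ M_n`. -/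
abbrev SVIx : Type := ℤ ⊕ ℤ ⊕ ℤ

variable (F : Type) [Field F] [CharZero F]

/-- Underlying space of the Schrödinger–Virasoro algebra: the free `F`-module on `SVIx`. -/
abbrev SVL := SVIx →₀ F

noncomputable def Lb (n : ℤ) : SVL F := Finsupp.single (Sum.inl n) 1
noncomputable def Yb (n : ℤ) : SVL F := Finsupp.single (Sum.inr (Sum.inl n)) 1
noncomputable def Mb (n : ℤ) : SVL F := Finsupp.single (Sum.inr (Sum.inr n)) 1

/-- The bracket of basis vectors.  Here `Yb n` stands for `Y_{n+1/2}`, so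
`[L_m, Y_{n+1/2}] = ((n+1/2) - m/2) Y_{m+n+1/2}` and
`[Y_{a+1/2}, Y_{b+1/2}] = (b-a) M_{a+b+1}`; all other brackets vanish. -/
noncomputable def brIx : SVIx → SVIx → SVL F
  | Sum.inl m, Sum.inl n => ((n - m : ℤ) : F) • Lb F (m + n)
  | Sum.inl m, Sum.inr (Sum.inl n) => (((2*n + 1 - m : ℤ) : F) / 2) • Yb F (m + n)
  | Sum.inl m, Sum.inr (Sum.inr n) => ((n : ℤ) : F) • Mb F (m + n)
  | Sum.inr (Sum.inl n), Sum.inl m => -((((2*n + 1 - m : ℤ) : F) / 2) • Yb F (m + n))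
  | Sum.inr (Sum.inl a), Sum.inr (Sum.inl b) => ((b - a : ℤ) : F) • Mb F (a + b + 1)
  | Sum.inr (Sum.inr n), Sum.inl m => -(((n : ℤ) : F) • Mb F (m + n))
  | _, _ => 0

/-- The bracket of the Schrödinger–Virasoro algebra: the bilinear extension of `brIx`. -/
noncomputable def bk : SVL F →ₗ[F] SVL F →ₗ[F] SVL F :=
  Finsupp.lsum F fun i => LinearMap.toSpanSingleton F (SVL F →ₗ[F] SVL F)
    (Finsupp.lsum F fun j => LinearMap.toSpanSingleton F (SVL F) (brIx F i j))

abbrev VV := SVL F ⊗[F] SVL F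

noncomputable instance : AddCommGroup (VV F) := inferInstance

noncomputable instance : Zero (VV F) :=
  (inferInstanceAs (AddCommMonoid (VV F)) : AddCommMonoid (VV F)).toAddMonoid.toZero

/-- The adjoint diagonal action of `L` on `L ⊗ L`, as a bilinear map:
`x · (a ⊗ b) = [x,a] ⊗ b + a ⊗ [x,b]`. -/
noncomputable def adVb : SVL F →ₗ[F] VV F →ₗ[F] VV F :=
  ((LinearMap.rTensorHom (SVL F) : (SVL F →ₗ[F] SVL F) →ₗ[F] (VV F →ₗ[F] VV F)) ∘ₗ bk F)
    + ((LinearMap.lTensorHom (SVL F) : (SVL F →ₗ[F] SVL F) →ₗ[F] (VV F →ₗ[F] VV F)) ∘ₗ bk F)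

/-- The twist map `τ(x ⊗ y) = y ⊗ x`. -/
noncomputable def tau : VV F →ₗ[F] VV F := (TensorProduct.comm F (SVL F) (SVL F)).toLinearMap

/-- The map `1 - τ`. -/
noncomputable def oneMinusTau : VV F →ₗ[F] VV F where
  toFun v := v - tau F v
  map_add' x y := by
    simp only [map_add]; exact sub_add_sub_comm x (tau F x) y (tau F y) ▸ rfl
  map_smul' c x := by simp only [map_smul, RingHom.id_apply, smul_sub]

/-- `Im (1 - τ) ⊂ L ⊗ L`. -/
noncomputable def skewIm : Submodule F (VV F) := LinearMap.range (oneMinusTau F)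
/-- Values on basis elements of the special derivations `D` with parameters
`(α, α†, β, β†, γ, γ†)`:  `D(L_n) = (nα+γ) M₀⊗M_n + (nα†+γ†) M_n⊗M₀`,
`D(Y_{n+1/2}) = β M₀⊗Y_{n+1/2} + β† Y_{n+1/2}⊗M₀`, `D(M_n) = 2(β M₀⊗M_n + β† M_n⊗M₀)`. -/
noncomputable def dval (a a' b b' c c' : F) : SVIx → VV F
  | Sum.inl n => (((n : ℤ) : F) * a + c) • (Mb F 0 ⊗ₜ[F] Mb F n)
      + (((n : ℤ) : F) * a' + c') • (Mb F n ⊗ₜ[F] Mb F 0)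
  | Sum.inr (Sum.inl n) => b • (Mb F 0 ⊗ₜ[F] Yb F n) + b' • (Yb F n ⊗ₜ[F] Mb F 0)
  | Sum.inr (Sum.inr n) => (2 * b) • (Mb F 0 ⊗ₜ[F] Mb F n) + (2 * b') • (Mb F n ⊗ₜ[F] Mb F 0)

/-- The special derivation with parameters `(α, α†, β, β†, γ, γ†)`. -/
noncomputable def Dmap (a a' b b' c c' : F) : SVL F →ₗ[F] VV F :=
  Finsupp.lsum F fun i => LinearMap.toSpanSingleton F (VV F) (dval F a a' b b' c c' i)

/-- `D` is a derivation from `L` to the `L`-module `L ⊗ L`. -/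
def IsDer (D : SVL F →ₗ[F] VV F) : Prop :=
  ∀ x y : SVL F, D (bk F x y) = adVb F x (D y) - adVb F y (D x)


-- infrastructure
noncomputable def ev (i j : SVIx) : VV F →ₗ[F] F :=
  (TensorProduct.lid F F).toLinearMap ∘ₗ TensorProduct.map (Finsupp.lapply i) (Finsupp.lapply j)

lemma ev_tmul (i j : SVIx) (a b : SVL F) : ev F i j (a ⊗ₜ b) = a i * b j := by
  simp [ev, smul_eq_mul]

lemma ev_eq_ftf (v : VV F) (i j : SVIx) :
    ev F i j v = finsuppTensorFinsupp' F SVIx SVIx v (i,j) := by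
  induction v using TensorProduct.induction_on with
  | zero => rw [map_zero, (finsuppTensorFinsupp' F SVIx SVIx).map_zero]; rfl
  | tmul a b => rw [ev_tmul, finsuppTensorFinsupp'_apply_apply]
  | add x y hx hy => rw [map_add, (finsuppTensorFinsupp' F SVIx SVIx).map_add, Finsupp.add_apply, hx, hy]

lemma ev_ext {v : VV F} (h : ∀ i j : SVIx, ev F i j v = 0) : v = 0 := by
  apply (finsuppTensorFinsupp' F SVIx SVIx).injective
  ext ⟨i, j⟩
  have := h i j
  rw [ev_eq_ftf] at this
  rw [(finsuppTensorFinsupp' F SVIx SVIx).map_zero, this]; rfl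

lemma ev_tau (i j : SVIx) (v : VV F) : ev F i j (tau F v) = ev F j i v := by
  induction v using TensorProduct.induction_on with
  | zero => simp
  | tmul a b => simp [tau, ev_tmul, mul_comm]
  | add x y hx hy => simp only [map_add, hx, hy]

lemma adVb_apply (x : SVL F) (v : VV F) :
    adVb F x v = LinearMap.rTensor (SVL F) (bk F x) v + LinearMap.lTensor (SVL F) (bk F x) v := rfl

lemma adVb_tmul (x a b : SVL F) :
    adVb F x (a ⊗ₜ b) = (bk F x a) ⊗ₜ b + a ⊗ₜ (bk F x b) := by
  rw [adVb_apply, LinearMap.rTensor_tmul, LinearMap.lTensor_tmul]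

lemma adVb_tau (x : SVL F) (v : VV F) : adVb F x (tau F v) = tau F (adVb F x v) := by
  induction v using TensorProduct.induction_on with
  | zero => simp
  | tmul a b => simp [tau, adVb_tmul, map_add, add_comm]
  | add x y hx hy => simp only [map_add, hx, hy]

lemma ev_rT (g : SVL F →ₗ[F] SVL F) (i s : SVIx) (C : F)
    (h : ∀ a : SVL F, g a i = C * a s) (j : SVIx) (v : VV F) :
    ev F i j (LinearMap.rTensor (SVL F) g v) = C * ev F s j v := by
  induction v using TensorProduct.induction_on with
  | zero => simp
  | tmul a b => rw [LinearMap.rTensor_tmul, ev_tmul, ev_tmul, h, mul_assoc]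
  | add x y hx hy => simp only [map_add, hx, hy, mul_add]

lemma ev_lT (g : SVL F →ₗ[F] SVL F) (j s : SVIx) (C : F)
    (h : ∀ a : SVL F, g a j = C * a s) (i : SVIx) (v : VV F) :
    ev F i j (LinearMap.lTensor (SVL F) g v) = C * ev F i s v := by
  induction v using TensorProduct.induction_on with
  | zero => simp
  | tmul a b => rw [LinearMap.lTensor_tmul, ev_tmul, ev_tmul, h]; ring
  | add x y hx hy => simp only [map_add, hx, hy, mul_add]

lemma bk_single_single (i j : SVIx) (c : F) :
    bk F (Finsupp.single i (1:F)) (Finsupp.single j c) = c • brIx F i j := by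
  simp [bk]

def shL (m : ℤ) : SVIx → SVIx
  | .inl n => .inl (n - m)
  | .inr (.inl n) => .inr (.inl (n - m))
  | .inr (.inr n) => .inr (.inr (n - m))

noncomputable def cL (m : ℤ) : SVIx → F
  | .inl n => ((n - 2*m : ℤ) : F)
  | .inr (.inl n) => ((2*n + 1 - 3*m : ℤ) : F) / 2
  | .inr (.inr n) => ((n - m : ℤ) : F)

def shM (k : ℤ) : SVIx → SVIx
  | .inr (.inr n) => .inl (n - k)
  | _ => .inl 0

noncomputable def cM (k : ℤ) : SVIx → F
  | .inr (.inr _) => -((k : ℤ) : F)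
  | _ => 0

def shY (A : ℤ) : SVIx → SVIx
  | .inr (.inl n) => .inl (n - A)
  | .inr (.inr n) => .inr (.inl (n - A - 1))
  | _ => .inl 0

noncomputable def cY (A : ℤ) : SVIx → F
  | .inr (.inl n) => -(((3*A + 1 - n : ℤ) : F) / 2)
  | .inr (.inr n) => ((n - 2*A - 1 : ℤ) : F)
  | _ => 0

lemma bkL (m : ℤ) (i : SVIx) (a : SVL F) :
    bk F (Lb F m) a i = cL F m i * a (shL m i) := by
  induction a using Finsupp.induction_linear with
  | zero => simp
  | add f g hf hg => rw [map_add, Finsupp.add_apply, Finsupp.add_apply, hf, hg]; ring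
  | single j c =>
    rw [Lb, bk_single_single]
    rcases j with n' | n' | n' <;> rcases i with n | n | n <;>
      simp only [brIx, Lb, Yb, Mb, cL, shL, Finsupp.smul_apply, Finsupp.single_apply,
        smul_eq_mul] <;>
      split_ifs with h1 h2 <;>
      first
        | (simp_all; done)
        | (exfalso; omega)
        | (subst h2; push_cast; ring)
        | (subst h2; push_cast; field_simp; ring)
        | (simp only [Sum.inl.injEq, Sum.inr.injEq] at *; first
            | omega
            | (subst h2; push_cast; ring)
            | (subst h2; push_cast; field_simp; ring))

lemma bkM (k : ℤ) (i : SVIx) (a : SVL F) :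
    bk F (Mb F k) a i = cM F k i * a (shM k i) := by
  induction a using Finsupp.induction_linear with
  | zero => simp
  | add f g hf hg => rw [map_add, Finsupp.add_apply, Finsupp.add_apply, hf, hg]; ring
  | single j c =>
    rw [Mb, bk_single_single]
    rcases j with n' | n' | n' <;> rcases i with n | n | n <;>
      simp only [brIx, Lb, Yb, Mb, cM, shM, Finsupp.smul_apply, Finsupp.single_apply,
        Finsupp.neg_apply, smul_eq_mul, Finsupp.coe_zero, Pi.zero_apply] <;>
      split_ifs with h1 h2 <;>
      first
        | (simp_all; done)
        | (exfalso; omega)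
        | (subst h2; push_cast; ring)
        | (subst h2; push_cast; field_simp; ring)
        | (simp only [Sum.inl.injEq, Sum.inr.injEq] at *; first
            | omega
            | (subst h2; push_cast; ring)
            | (subst h2; push_cast; field_simp; ring))

lemma bkY (A : ℤ) (i : SVIx) (a : SVL F) :
    bk F (Yb F A) a i = cY F A i * a (shY A i) := by
  induction a using Finsupp.induction_linear with
  | zero => simp
  | add f g hf hg => rw [map_add, Finsupp.add_apply, Finsupp.add_apply, hf, hg]; ring
  | single j c =>
    rw [Yb, bk_single_single]
    rcases j with n' | n' | n' <;> rcases i with n | n | n <;>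
      simp only [brIx, Lb, Yb, Mb, cY, shY, Finsupp.smul_apply, Finsupp.single_apply,
        Finsupp.neg_apply, smul_eq_mul, Finsupp.coe_zero, Pi.zero_apply] <;>
      split_ifs with h1 h2 <;>
      first
        | (simp_all; done)
        | (exfalso; omega)
        | (subst h2; push_cast; ring)
        | (subst h2; push_cast; field_simp; ring)
        | (simp only [Sum.inl.injEq, Sum.inr.injEq] at *; first
            | omega
            | (subst h2; push_cast; ring)
            | (subst h2; push_cast; field_simp; ring))

lemma ev_adVb_L (m : ℤ) (i j : SVIx) (v : VV F) :
    ev F i j (adVb F (Lb F m) v)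
      = cL F m i * ev F (shL m i) j v + cL F m j * ev F i (shL m j) v := by
  rw [adVb_apply, map_add,
    ev_rT F (bk F (Lb F m)) i (shL m i) (cL F m i) (fun a => bkL F m i a) j v,
    ev_lT F (bk F (Lb F m)) j (shL m j) (cL F m j) (fun a => bkL F m j a) i v]

lemma ev_adVb_M (k : ℤ) (i j : SVIx) (v : VV F) :
    ev F i j (adVb F (Mb F k) v)
      = cM F k i * ev F (shM k i) j v + cM F k j * ev F i (shM k j) v := by
  rw [adVb_apply, map_add,
    ev_rT F (bk F (Mb F k)) i (shM k i) (cM F k i) (fun a => bkM F k i a) j v,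
    ev_lT F (bk F (Mb F k)) j (shM k j) (cM F k j) (fun a => bkM F k j a) i v]

lemma ev_adVb_Y (A : ℤ) (i j : SVIx) (v : VV F) :
    ev F i j (adVb F (Yb F A) v)
      = cY F A i * ev F (shY A i) j v + cY F A j * ev F i (shY A j) v := by
  rw [adVb_apply, map_add,
    ev_rT F (bk F (Yb F A)) i (shY A i) (cY F A i) (fun a => bkY F A i a) j v,
    ev_lT F (bk F (Yb F A)) j (shY A j) (cY F A j) (fun a => bkY F A j a) i v]

noncomputable def cf (w : VV F) (i j : SVIx) : F := ev F i j w

lemma invariant_classify (w : VV F) (hw : ∀ x : SVL F, adVb F x w = 0)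
    (hsym : tau F w = w) :
    w = (cf F w (.inr (.inr 0)) (.inr (.inr 0))) • (Mb F 0 ⊗ₜ[F] Mb F 0) := by
  have relL : ∀ (m : ℤ) (i j : SVIx),
      cL F m i * cf F w (shL m i) j + cL F m j * cf F w i (shL m j) = 0 := by
    intro m i j
    have h := ev_adVb_L F m i j w
    rw [hw, map_zero] at h
    exact h.symm
  have relM : ∀ (k : ℤ) (i j : SVIx),
      cM F k i * cf F w (shM k i) j + cM F k j * cf F w i (shM k j) = 0 := by
    intro k i j
    have h := ev_adVb_M F k i j w
    rw [hw, map_zero] at h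
    exact h.symm
  have relY : ∀ (A : ℤ) (i j : SVIx),
      cY F A i * cf F w (shY A i) j + cY F A j * cf F w i (shY A j) = 0 := by
    intro A i j
    have h := ev_adVb_Y F A i j w
    rw [hw, map_zero] at h
    exact h.symm
  have csym : ∀ i j : SVIx, cf F w i j = cf F w j i := by
    intro i j
    conv_lhs => rw [cf, ← hsym, ev_tau]
    rfl
  -- c (L_p) (L_q) = 0
  have hLL : ∀ p q : ℤ, cf F w (.inl p) (.inl q) = 0 := by
    intro p q
    have h := relM 1 (.inr (.inr (p+1))) (.inl q)
    simp only [cM, shM, Int.cast_one] at h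
    have e : p + 1 - 1 = p := by ring
    rw [e] at h
    linear_combination -h
  -- c (L_p) (Y_q) = 0
  have hLY : ∀ p q : ℤ, cf F w (.inl p) (.inr (.inl q)) = 0 := by
    intro p q
    have h := relM 1 (.inr (.inr (p+1))) (.inr (.inl q))
    simp only [cM, shM, Int.cast_one] at h
    have e : p + 1 - 1 = p := by ring
    rw [e] at h
    linear_combination -h
  -- c (L_p) (M_{-p}) = 0 for p ≠ 0
  have hLMA : ∀ p : ℤ, p ≠ 0 → cf F w (.inl p) (.inr (.inr (-p))) = 0 := by
    intro p hp
    have h := relM (-2*p) (.inr (.inr (-p))) (.inr (.inr (-p)))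
    simp only [cM, shM] at h
    have e : -p - -2*p = p := by ring
    rw [e] at h
    rw [csym (.inr (.inr (-p))) (.inl p)] at h
    have hk : ((2*p : ℤ) : F) ≠ 0 := by
      rw [Int.cast_ne_zero]; omega
    have h2 : ((2*p : ℤ) : F) * cf F w (.inl p) (.inr (.inr (-p))) = 0 := by
      push_cast at h ⊢
      linear_combination h / 2
    rcases mul_eq_zero.mp h2 with h' | h'
    · exact absurd h' hk
    · exact h'
  -- c (L_p) (M_q) = 0 in general
  have hLM : ∀ p q : ℤ, cf F w (.inl p) (.inr (.inr q)) = 0 := by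
    intro p q
    by_cases hpq : p + q = 0
    · have hq : q = -p := by omega
      subst hq
      by_cases hp : p = 0
      · subst hp
        have h := relM 1 (.inr (.inr 1)) (.inr (.inr 0))
        simp only [cM, shM, Int.cast_one] at h
        have e1 : (1:ℤ) - 1 = 0 := by ring
        have e2 : (0:ℤ) - 1 = -1 := by ring
        rw [e1, e2] at h
        have h3 : cf F w (.inr (.inr 1)) (.inl (-1)) = 0 := by
          rw [csym]
          have := hLMA (-1) (by omega)
          simpa using this
        rw [h3] at h
        have e3 : -(0:ℤ) = 0 := by ring
        rw [show cf F w (.inl 0) (.inr (.inr (-0)))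
            = cf F w (.inl 0) (.inr (.inr 0)) from by rw [e3]]
        linear_combination -h
      · exact hLMA p hp
    · have h := relL 0 (.inl p) (.inr (.inr q))
      simp only [cL, shL] at h
      have e : p - 0 = p := by ring
      have e2 : q - 0 = q := by ring
      rw [e, e2] at h
      have hcoef : ((p + q : ℤ) : F) ≠ 0 := by
        rw [Int.cast_ne_zero]; omega
      have h2 : ((p + q : ℤ) : F) * cf F w (.inl p) (.inr (.inr q)) = 0 := by
        push_cast at h ⊢
        linear_combination h
      rcases mul_eq_zero.mp h2 with h' | h'
      · exact absurd h' hcoef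
      · exact h'
  -- c (Y_p) (Y_q) = 0
  have hYY : ∀ p q : ℤ, cf F w (.inr (.inl p)) (.inr (.inl q)) = 0 := by
    intro p q
    have h := relY (q-1) (.inr (.inl p)) (.inr (.inr (2*q)))
    simp only [cY, shY] at h
    have e1 : 2*q - (q-1) - 1 = q := by ring
    rw [e1] at h
    rw [hLM (p - (q-1)) (2*q)] at h
    push_cast at h
    linear_combination h
  -- c (Y_p) (M_q) = 0 : half-integer weight
  have hYM : ∀ p q : ℤ, cf F w (.inr (.inl p)) (.inr (.inr q)) = 0 := by
    intro p q
    have h := relL 0 (.inr (.inl p)) (.inr (.inr q))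
    simp only [cL, shL] at h
    have e : p - 0 = p := by ring
    have e2 : q - 0 = q := by ring
    rw [e, e2] at h
    have hcoef : ((2*p + 1 + 2*q : ℤ) : F) ≠ 0 := by
      rw [Int.cast_ne_zero]; omega
    have h2 : ((2*p + 1 + 2*q : ℤ) : F) * cf F w (.inr (.inl p)) (.inr (.inr q)) = 0 := by
      push_cast at h ⊢
      linear_combination 2 * h
    rcases mul_eq_zero.mp h2 with h' | h'
    · exact absurd h' hcoef
    · exact h'
  -- c (M_p) (M_q) = 0 unless p = q = 0
  have hMM : ∀ p q : ℤ, ¬(p = 0 ∧ q = 0) → cf F w (.inr (.inr p)) (.inr (.inr q)) = 0 := by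
    have key : ∀ p q : ℤ, p ≠ 0 → cf F w (.inr (.inr p)) (.inr (.inr q)) = 0 := by
      intro p q hp
      have h := relL q (.inr (.inr (p+q))) (.inr (.inr q))
      simp only [cL, shL] at h
      have e1 : p + q - q = p := by ring
      rw [e1] at h
      have hpF : ((p : ℤ) : F) ≠ 0 := by rw [Int.cast_ne_zero]; exact hp
      have h2 : ((p : ℤ) : F) * cf F w (.inr (.inr p)) (.inr (.inr q)) = 0 := by
        push_cast at h ⊢
        linear_combination h
      rcases mul_eq_zero.mp h2 with h' | h'
      · exact absurd h' hpF
      · exact h'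
    intro p q hpq
    by_cases hp : p = 0
    · subst hp
      have hq : q ≠ 0 := by tauto
      rw [csym]
      exact key q 0 hq
    · exact key p q hp
  -- conclude
  have hzero : w - (cf F w (.inr (.inr 0)) (.inr (.inr 0))) • (Mb F 0 ⊗ₜ[F] Mb F 0) = 0 := by
    apply ev_ext
    intro i j
    rw [map_sub, map_smul, ev_tmul, smul_eq_mul]
    have hM0 : ∀ r : ℤ, Mb F 0 (Sum.inr (Sum.inr r)) = if r = 0 then 1 else 0 := by
      intro r
      simp [Mb, Finsupp.single_apply, eq_comm]
    have hM0L : ∀ r : ℤ, Mb F 0 (Sum.inl r) = 0 := by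
      intro r; simp [Mb, Finsupp.single_apply]
    have hM0Y : ∀ r : ℤ, Mb F 0 (Sum.inr (Sum.inl r)) = 0 := by
      intro r; simp [Mb, Finsupp.single_apply]
    rcases i with p | p | p <;> rcases j with q | q | q
    · rw [show (ev F (Sum.inl p) (Sum.inl q)) w = 0 from hLL p q, hM0L]; ring
    · rw [show (ev F (Sum.inl p) (Sum.inr (Sum.inl q))) w = 0 from hLY p q, hM0L]; ring
    · rw [show (ev F (Sum.inl p) (Sum.inr (Sum.inr q))) w = 0 from hLM p q, hM0L]; ring
    · rw [show (ev F (Sum.inr (Sum.inl p)) (Sum.inl q)) w = 0 from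
        (csym _ _).trans (hLY q p), hM0Y]; ring
    · rw [show (ev F (Sum.inr (Sum.inl p)) (Sum.inr (Sum.inl q))) w = 0 from hYY p q, hM0Y]
      ring
    · rw [show (ev F (Sum.inr (Sum.inl p)) (Sum.inr (Sum.inr q))) w = 0 from hYM p q, hM0Y]
      ring
    · rw [show (ev F (Sum.inr (Sum.inr p)) (Sum.inl q)) w = 0 from
        (csym _ _).trans (hLM q p), hM0L]; ring
    · rw [show (ev F (Sum.inr (Sum.inr p)) (Sum.inr (Sum.inl q))) w = 0 from
        (csym _ _).trans (hYM q p), hM0Y]; ring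
    · by_cases hpq : p = 0 ∧ q = 0
      · obtain ⟨hp, hq⟩ := hpq
        subst hp; subst hq
        rw [hM0]
        simp [cf]
      · rw [show (ev F (Sum.inr (Sum.inr p)) (Sum.inr (Sum.inr q))) w = 0 from hMM p q hpq,
          hM0, hM0]
        rcases (not_and_or.mp hpq) with h' | h'
        · rw [if_neg h']; ring
        · rw [if_neg h']; ring
  have := sub_eq_zero.mp hzero
  exact this


lemma tau_tau (u : VV F) : tau F (tau F u) = u := by
  induction u using TensorProduct.induction_on with
  | zero => simp
  | tmul a b => simp [tau]
  | add x y hx hy => rw [map_add, map_add, hx, hy]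


/-- If `x · v ∈ Im(1-τ)` for all `x ∈ L`, then `v - d₀ M₀ ⊗ M₀ ∈ Im(1-τ)` for some `d₀`. -/
theorem sv_almost_skew :
    ∀ v : VV F, (∀ x : SVL F, adVb F x v ∈ skewIm F) →
      ∃ d0 : F, v - d0 • (Mb F 0 ⊗ₜ[F] Mb F 0) ∈ skewIm F := by
  intro v hv
  have hw : ∀ x : SVL F, adVb F x (v + tau F v) = 0 := by
    intro x
    obtain ⟨u, hu⟩ := hv x
    have htau : tau F (adVb F x v) = -(adVb F x v) := by
      rw [← hu]
      show tau F (u - tau F u) = -(u - tau F u)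
      rw [map_sub, tau_tau]
      abel
    rw [map_add, adVb_tau, htau, add_neg_cancel]
  have hsym : tau F (v + tau F v) = v + tau F v := by
    rw [map_add, tau_tau, add_comm]
  have hcls := invariant_classify F (v + tau F v) hw hsym
  set c0 : F := cf F (v + tau F v) (.inr (.inr 0)) (.inr (.inr 0)) with hc0
  refine ⟨c0 / 2, ⟨(1/2 : F) • v, ?_⟩⟩
  have happ : oneMinusTau F ((1/2 : F) • v) = (1/2 : F) • v - (1/2 : F) • tau F v := by
    show (1/2 : F) • v - tau F ((1/2 : F) • v) = _
    rw [map_smul]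
  rw [happ]
  have htv : tau F v = c0 • (Mb F 0 ⊗ₜ[F] Mb F 0) - v := eq_sub_of_add_eq' hcls
  rw [htv]
  rw [smul_sub, smul_smul]
  rw [sub_sub_eq_add_sub, ← add_smul]
  norm_num
  rw [show (1 / 2 * c0 : F) = c0 / 2 from by ring]
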